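/- Fix ε ∈ (0,1) and c ∈ (0, ε·R_min²/σ), and let t0 < t1 with 0 < t1 − t0 < σ. Set u := (R(t0)² + √(R(t0)²R(t1)² − c²(t1−t0)²))/(R(t0)·(t1−t0)). Then 2R'(t0) + u > max{0, R'(t0)}; in particular, of the two roots R'(t0) ± (R'(t0)+u) of the pre- /post-impact radial velocity equation, only the root −u is smaller than min{0, R'(t0)} and can represent the radial velocity of a particle leaving the moving boundary. -/
import Mathlib


noncomputable section

/-- Sup-norm of a function (for a continuous 1-periodic function this is the maximum of `|f|`). -/
def supNorm (f : ℝ → ℝ) : ℝ := sSup (Set.range fun t => |f t|)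

/-- Minimum value of `R` (attained for a continuous 1-periodic `R`). -/
def Rmin (R : ℝ → ℝ) : ℝ := sInf (Set.range R)

/-- Maximum value of `R` (attained for a continuous 1-periodic `R`). -/
def Rmax (R : ℝ → ℝ) : ℝ := sSup (Set.range R)

/-- The constant `σ = min { R_min/(2‖R'‖) , 2√(1+√(1−ε²))·R_min/√‖(R²)''‖ }`. -/
def sigmaR (R : ℝ → ℝ) (ε : ℝ) : ℝ :=
  min (Rmin R / (2 * supNorm (deriv R)))
    (2 * Real.sqrt (1 + Real.sqrt (1 - ε ^ 2)) * Rmin R /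
      Real.sqrt (supNorm (deriv (deriv (fun t => R t ^ 2)))))

/-- `√(R(t0)²R(t1)² − c²(t1−t0)²)`. -/
def Ssq (R : ℝ → ℝ) (c t0 t1 : ℝ) : ℝ :=
  Real.sqrt (R t0 ^ 2 * R t1 ^ 2 - c ^ 2 * (t1 - t0) ^ 2)

/-- `A(t0,t1) = (R(t0)² + R(t1)² + 2√(R(t0)²R(t1)² − c²(t1−t0)²))/(t1−t0)²`. -/
def Afun (R : ℝ → ℝ) (c t0 t1 : ℝ) : ℝ :=
  (R t0 ^ 2 + R t1 ^ 2 + 2 * Ssq R c t0 t1) / (t1 - t0) ^ 2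

/-- `B = −( t0 + (R(t0)² + √(R(t0)²R(t1)² − c²(t1−t0)²))/((t1−t0)·A) )`. -/
def Bfun (R : ℝ → ℝ) (c t0 t1 : ℝ) : ℝ :=
  -(t0 + (R t0 ^ 2 + Ssq R c t0 t1) / ((t1 - t0) * Afun R c t0 t1))

/-- The Dirichlet solution `r(t) = √((A²(t+B)² + c²)/A)`. -/
def dirich (R : ℝ → ℝ) (c t0 t1 t : ℝ) : ℝ :=
  Real.sqrt ((Afun R c t0 t1 ^ 2 * (t + Bfun R c t0 t1) ^ 2 + c ^ 2) / Afun R c t0 t1)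

/-- The generating function
`h(t0,t1) = ½(t1−t0)·A(t0,t1) + c·arctan( c(t1−t0)/√(R(t0)²R(t1)² − c²(t1−t0)²) )`. -/
def hgen (R : ℝ → ℝ) (c t0 t1 : ℝ) : ℝ :=
  (1 / 2) * (t1 - t0) * Afun R c t0 t1 +
    c * Real.arctan (c * (t1 - t0) / Ssq R c t0 t1)

/-- `∂₁h`, the partial derivative of `h` in its first argument. -/
def d1h (R : ℝ → ℝ) (c t0 t1 : ℝ) : ℝ := deriv (fun s => hgen R c s t1) t0

/-- `∂₂h`, the partial derivative of `h` in its second argument. -/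
def d2h (R : ℝ → ℝ) (c t0 t1 : ℝ) : ℝ := deriv (fun s => hgen R c t0 s) t1

/-- `∂₁₂h`, the mixed second partial derivative of `h`. -/
def d12h (R : ℝ → ℝ) (c t0 t1 : ℝ) : ℝ := deriv (fun s => d1h R c t0 s) t1

/-- For `c ∈ (0, ε R_min²/σ)` and `0 < t1 − t0 < σ`, with
`u = (R(t0)² + √(R(t0)²R(t1)² − c²(t1−t0)²))/(R(t0)(t1−t0))` one has
`2R'(t0) + u > max{0, R'(t0)}`; in particular, of the two roots `R'(t0) ± (R'(t0)+u)` of the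
impact radial velocity equation, only the root `−u` is smaller than `min{0, R'(t0)}` and can
represent the radial velocity of a particle leaving the moving boundary. -/
theorem only_admissible_root (R : ℝ → ℝ) (ε c t0 t1 : ℝ)
    (hC : ContDiff ℝ 2 R) (hper : ∀ t, R (t + 1) = R t) (hpos : ∀ t, 0 < R t)
    (hnc : ∃ a b, R a ≠ R b)
    (hε : ε ∈ Set.Ioo (0 : ℝ) 1) (hσ : 0 < sigmaR R ε)
    (hc : c ∈ Set.Ioo 0 (ε * Rmin R ^ 2 / sigmaR R ε))
    (h1 : 0 < t1 - t0) (h2 : t1 - t0 < sigmaR R ε) :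
    max 0 (deriv R t0) <
      2 * deriv R t0 + (R t0 ^ 2 + Ssq R c t0 t1) / (R t0 * (t1 - t0)) ∧
    -((R t0 ^ 2 + Ssq R c t0 t1) / (R t0 * (t1 - t0))) < min 0 (deriv R t0) := by
  obtain ⟨hc0, hc1⟩ := hc
  set N := supNorm (deriv R) with hNdef
  have hS : 0 ≤ Ssq R c t0 t1 := Real.sqrt_nonneg _
  have hN0 : 0 ≤ N := by
    apply Real.sSup_nonneg
    rintro x ⟨t, rfl⟩; exact abs_nonneg _
  have hσle : sigmaR R ε ≤ Rmin R / (2 * N) := min_le_left _ _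
  have hq : 0 < Rmin R / (2 * N) := lt_of_lt_of_le hσ hσle
  have hNpos : 0 < N := by
    rcases hN0.lt_or_eq with h | h
    · exact h
    · exfalso; rw [← h] at hq; simp at hq
  have hRminpos : 0 < Rmin R := by
    rcases div_pos_iff.mp hq with ⟨h, _⟩ | ⟨_, h⟩
    · exact h
    · linarith
  have hderper : ∀ t, deriv R (t + 1) = deriv R t := by
    intro t
    have hfe : (fun s => R (s + 1)) = R := funext hper
    rw [← deriv_comp_add_const R 1 t, hfe]
  have hcont : Continuous (deriv R) := hC.continuous_deriv (by norm_num)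
  have hPa : Function.Periodic (fun t => |deriv R t|) 1 := by
    intro t; simp [hderper t]
  have hbdd : BddAbove (Set.range fun t => |deriv R t|) := by
    rw [← hPa.image_Icc one_pos 0]
    exact (isCompact_Icc.image hcont.abs).bddAbove
  have hle : |deriv R t0| ≤ N := le_csSup hbdd ⟨t0, rfl⟩
  have hRminle : Rmin R ≤ R t0 := by
    refine csInf_le ⟨0, ?_⟩ ⟨t0, rfl⟩
    rintro x ⟨t, rfl⟩; exact (hpos t).le
  have hRt0 : 0 < R t0 := hpos t0
  have h3 : t1 - t0 < Rmin R / (2 * N) := h2.trans_le hσle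
  have h4 : (t1 - t0) * (2 * N) < Rmin R := (lt_div_iff₀ (by positivity)).mp h3
  have hu : 2 * N < (R t0 ^ 2 + Ssq R c t0 t1) / (R t0 * (t1 - t0)) := by
    rw [lt_div_iff₀ (by positivity)]
    nlinarith [hRt0, hRminle, hS]
  obtain ⟨hD1, hD2⟩ := abs_le.mp hle
  constructor
  · exact max_lt_iff.mpr ⟨by linarith, by linarith⟩
  · exact lt_min_iff.mpr ⟨by linarith, by linarith⟩
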